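/- The sum of the coefficients of z^3 through z^13 in the power series expansion of 2z^3(2z+1)/(1-6z^2) equals 24882. -/

import Mathlib

open PowerSeries

noncomputable def Sinv : PowerSeries ℚ :=
  PowerSeries.mk fun n => if 2 ∣ n then (6 : ℚ) ^ (n / 2) else 0

lemma Sinv_mul : Sinv * (1 - 6 * X ^ 2) = 1 := by
  ext n
  rw [mul_sub, mul_one, map_sub]
  rw [show (Sinv * (6 * X ^ 2)) = (C (R := ℚ) 6) * (X ^ 2 * Sinv) by
    rw [← map_ofNat (C (R := ℚ)) 6]; ring, PowerSeries.coeff_C_mul]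
  match n with
  | 0 => simp [Sinv, PowerSeries.coeff_X_pow_mul']
  | 1 => simp [Sinv, PowerSeries.coeff_X_pow_mul', Nat.dvd_iff_mod_eq_zero]
  | (d + 2) =>
    rw [show d + 2 = d + 2 from rfl, PowerSeries.coeff_X_pow_mul]
    simp only [Sinv, PowerSeries.coeff_mk, PowerSeries.coeff_one]
    rcases Nat.even_or_odd d with ⟨k, hk⟩ | ⟨k, hk⟩
    · subst hk
      have h1 : 2 ∣ k + k + 2 := ⟨k+1, by ring⟩
      have h2 : 2 ∣ k + k := ⟨k, by ring⟩
      simp [h1, h2, Nat.add_mul_div_left, pow_succ,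
        show (k+k+2)/2 = k+1 by omega, show (k+k)/2 = k by omega]
      ring
    · subst hk
      have h1 : ¬ 2 ∣ 2*k+1+2 := by omega
      have h2 : ¬ 2 ∣ 2*k+1 := by omega
      simp [h1, h2]

theorem single_tuck_total :
    (∑ n ∈ Finset.Icc (3 : ℕ) 13,
      PowerSeries.coeff (R := ℚ) n ((2 * X ^ 3 * (2 * X + 1) : ℚ⟦X⟧) * (1 - 6 * X ^ 2)⁻¹)) =
      24882 := by
  have hinv : ((1 - 6 * X ^ 2 : ℚ⟦X⟧))⁻¹ = Sinv := by
    rw [PowerSeries.inv_eq_iff_mul_eq_one (by simp)]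
    exact Sinv_mul
  have hA : (2 * X ^ 3 * (2 * X + 1) : ℚ⟦X⟧) * Sinv
      = C (R := ℚ) 4 * (X ^ 4 * Sinv) + C (R := ℚ) 2 * (X ^ 3 * Sinv) := by
    simp only [map_ofNat]; ring
  rw [hinv, hA]
  simp only [map_add, PowerSeries.coeff_C_mul, PowerSeries.coeff_X_pow_mul', Sinv,
    PowerSeries.coeff_mk]
  norm_num [Finset.sum_Icc_succ_top, Nat.dvd_iff_mod_eq_zero]
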